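/- If u : A ⥤ B and u' : A' ⥤ B' are aspheric functors between small categories, then the product functor u × u' : A × A' ⥤ B × B' is aspheric. In particular (taking B = B' to be the terminal category) the product of two aspheric small categories is aspheric. -/

import Mathlib

open CategoryTheory Limits

namespace Paper

/-- A right asphericity structure: a class of small categories satisfying (As1): every
small category having a terminal object belongs to the class, and (As2): if `u : A ⥤ B`
is a functor with `B` in the class and all comma categories `A/b` in the class, then `A`
is in the class. -/
def IsRightAsphericityStructure (𝒜 : Set Cat.{0,0}) : Prop :=
  (∀ C : Cat.{0,0}, HasTerminal C → C ∈ 𝒜) ∧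
  (∀ (A B : Cat.{0,0}) (u : A ⥤ B), B ∈ 𝒜 →
    (∀ b : B, Cat.of (CostructuredArrow u b) ∈ 𝒜) → A ∈ 𝒜)

/-- A functor between small categories is aspheric (w.r.t. a class 𝒜 of small
categories) if all its comma categories `A/b` belong to 𝒜. -/
def Aspheric (𝒜 : Set Cat.{0,0}) {A B : Cat.{0,0}} (u : A ⥤ B) : Prop :=
  ∀ b : B, Cat.of (CostructuredArrow u b) ∈ 𝒜

section Helpers

/-- If `F : A ⥤ B` has all its comma categories with terminal objects and `B ∈ 𝒜`,
then `A ∈ 𝒜`. -/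
lemma mem_step {𝒜 : Set Cat.{0,0}} (h𝒜 : IsRightAsphericityStructure 𝒜)
    {A B : Cat.{0,0}} (F : A ⥤ B)
    (hB : B ∈ 𝒜) (h : ∀ b : B, HasTerminal (CostructuredArrow F b)) : A ∈ 𝒜 :=
  h𝒜.2 A B F hB fun b => h𝒜.1 (Cat.of (CostructuredArrow F b)) (h b)

variable {A B A' B' : Type} [Category.{0} A] [Category.{0} B] [Category.{0} A']
  [Category.{0} B']

/-- Projection from the comma category of `u.prod u'` over `(b, b')` to the comma
category of `u'` over `b'`. -/
@[simps!]
def prodCommaSnd (u : A ⥤ B) (u' : A' ⥤ B') (b : B) (b' : B') :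
    CostructuredArrow (u.prod u') (b, b') ⥤ CostructuredArrow u' b' where
  obj X := CostructuredArrow.mk (Y := X.left.2) X.hom.2
  map {X Y} φ := CostructuredArrow.homMk φ.left.2
    (congrArg Prod.snd (CostructuredArrow.w φ))

/-- Projection from a comma category of `prodCommaSnd` to the comma category of `u`
over `b`. -/
@[simps!]
def prodCommaFst (u : A ⥤ B) (u' : A' ⥤ B') (b : B) (b' : B') (y : CostructuredArrow u' b') :
    CostructuredArrow (prodCommaSnd u u' b b') y ⥤ CostructuredArrow u b where
  obj Z := CostructuredArrow.mk (Y := Z.left.left.1) Z.left.hom.1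
  map ψ := CostructuredArrow.homMk ψ.left.left.1
    (congrArg Prod.fst (CostructuredArrow.w ψ.left))

set_option linter.unnecessarySimpa false in
lemma hasTerminal_prodCommaFst (u : A ⥤ B) (u' : A' ⥤ B') (b : B) (b' : B')
    (y : CostructuredArrow u' b') (x : CostructuredArrow u b) :
    HasTerminal (CostructuredArrow (prodCommaFst u u' b b' y) x) := by
  let W : CostructuredArrow (u.prod u') (b, b') :=
    CostructuredArrow.mk (Y := (x.left, y.left)) ((x.hom, y.hom) : _ ⟶ (b, b'))
  let Z₀ : CostructuredArrow (prodCommaSnd u u' b b') y :=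
    CostructuredArrow.mk (Y := W) (CostructuredArrow.homMk (𝟙 y.left) (by
      simp [W]; exact (congrArg (· ≫ y.hom) (u'.map_id y.left)).trans (Category.id_comp _)))
  let T : CostructuredArrow (prodCommaFst u u' b b' y) x :=
    CostructuredArrow.mk (Y := Z₀) (CostructuredArrow.homMk (𝟙 x.left) (by
      simp [Z₀, W]; exact (congrArg (· ≫ x.hom) (u.map_id x.left)).trans (Category.id_comp _)))
  have hT : IsTerminal T := by
    refine IsTerminal.ofUniqueHom (fun P => ?_) (fun P m => ?_)
    · refine CostructuredArrow.homMk (CostructuredArrow.homMk (CostructuredArrow.homMk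
        ((P.hom.left, P.left.hom.left) : P.left.left.left ⟶ (x.left, y.left)) ?_) ?_) ?_
      · refine Prod.ext ?_ ?_
        · exact CostructuredArrow.w P.hom
        · exact CostructuredArrow.w P.left.hom
      · apply CostructuredArrow.hom_ext
        simp [T, Z₀, W, CostructuredArrow.homMk_left]; exact Category.comp_id _
      · apply CostructuredArrow.hom_ext
        simp [T, Z₀, W, CostructuredArrow.homMk_left]; exact Category.comp_id _
    · have h1 := congrArg CommaMorphism.left (CostructuredArrow.w m)
      have h2 := congrArg CommaMorphism.left (CostructuredArrow.w m.left)
      simp [T, Z₀, W] at h1 h2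
      apply CostructuredArrow.hom_ext
      apply CostructuredArrow.hom_ext
      apply CostructuredArrow.hom_ext
      exact Prod.ext ((Category.comp_id _).symm.trans h1) ((Category.comp_id _).symm.trans h2)
  exact hT.hasTerminal

variable (A A') in
/-- Projection from a comma category of the second product projection to the first
factor. -/
@[simps]
def sndComma (c' : A') : CostructuredArrow (CategoryTheory.Prod.snd A A') c' ⥤ A where
  obj X := X.left.1
  map φ := φ.left.1

set_option linter.unnecessarySimpa false in
lemma hasTerminal_sndComma (c' : A') (c : A) :
    HasTerminal (CostructuredArrow (sndComma A A' c') c) := by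
  let W : CostructuredArrow (CategoryTheory.Prod.snd A A') c' :=
    CostructuredArrow.mk (Y := (c, c')) (𝟙 c')
  let T : CostructuredArrow (sndComma A A' c') c := CostructuredArrow.mk (Y := W) (𝟙 c)
  have hT : IsTerminal T := by
    refine IsTerminal.ofUniqueHom (fun P => ?_) (fun P m => ?_)
    · refine CostructuredArrow.homMk (CostructuredArrow.homMk
        ((P.hom, P.left.hom) : P.left.left ⟶ (c, c')) ?_) ?_
      · simp [T, W]; exact Category.comp_id _
      · simp [T, W, CostructuredArrow.homMk_left]; exact Category.comp_id _
    · have h1 := CostructuredArrow.w m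
      have h2 := CostructuredArrow.w m.left
      simp [T, W, -CostructuredArrow.w] at h1 h2
      apply CostructuredArrow.hom_ext
      apply CostructuredArrow.hom_ext
      exact Prod.ext ((Category.comp_id _).symm.trans h1) ((Category.comp_id _).symm.trans h2)
  exact hT.hasTerminal

end Helpers

/-- The product of two aspheric functors is aspheric; in particular, the product of two
aspheric small categories is aspheric. -/
theorem prod_aspheric (𝒜 : Set Cat.{0,0}) (h𝒜 : IsRightAsphericityStructure 𝒜) :
    (∀ (A B A' B' : Cat.{0,0}) (u : A ⥤ B) (u' : A' ⥤ B'),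
      Aspheric 𝒜 u → Aspheric 𝒜 u' →
      Aspheric 𝒜 (A := Cat.of (A × A')) (B := Cat.of (B × B')) (u.prod u')) ∧
    (∀ C C' : Cat.{0,0}, C ∈ 𝒜 → C' ∈ 𝒜 → Cat.of (C × C') ∈ 𝒜) := by
  constructor
  · rintro A B A' B' u u' hu hu' ⟨b, b'⟩
    exact h𝒜.2 _ (Cat.of (CostructuredArrow u' b')) (prodCommaSnd u u' b b') (hu' b')
      fun y => mem_step h𝒜 (prodCommaFst u u' b b' y) (hu b)
        fun x => hasTerminal_prodCommaFst u u' b b' y x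
  · intro C C' hC hC'
    exact h𝒜.2 _ C' (CategoryTheory.Prod.snd C C') hC'
      fun c' => mem_step h𝒜 (sndComma C C' c') hC fun c => hasTerminal_sndComma c' c

end Paper
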